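/- Let P be a probability measure on the unit sphere of ℝᵈ and λ ∈ [0,1]. Any minimizer (w_λ, ρ_λ) of F(w,ρ) := (1/2)(‖w‖² + ρ²) - λρ + E_{X∼P}[(ρ - ⟨w,X⟩)₊] satisfies ρ_λ ≤ ‖w_λ‖. -/

import Mathlib

open MeasureTheory RealInnerProductSpace

theorem stmt_14 (d : ℕ) (P : Measure (EuclideanSpace ℝ (Fin d))) [IsProbabilityMeasure P]
    (hsupp : ∀ᵐ x ∂P, ‖x‖ = 1) (lam : ℝ) (hlam : lam ∈ Set.Icc (0 : ℝ) 1)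
    (wl : EuclideanSpace ℝ (Fin d)) (ρl : ℝ)
    (F : EuclideanSpace ℝ (Fin d) → ℝ → ℝ)
    (hF : ∀ w ρ, F w ρ = (1 : ℝ) / 2 * (‖w‖ ^ 2 + ρ ^ 2) - lam * ρ
            + ∫ x, max (ρ - ⟪w, x⟫) 0 ∂P)
    (hmin : ∀ w ρ, F wl ρl ≤ F w ρ) :
    ρl ≤ ‖wl‖ := by
  by_contra h
  push_neg at h
  -- a.e. bound on the inner product
  have hbd : ∀ᵐ x ∂P, ⟪wl, x⟫ ≤ ‖wl‖ := by
    filter_upwards [hsupp] with x hx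
    calc ⟪wl, x⟫ ≤ ‖wl‖ * ‖x‖ := real_inner_le_norm wl x
    _ = ‖wl‖ := by rw [hx, mul_one]
  have hg : Integrable (fun x => ⟪wl, x⟫) P := by
    apply (integrable_const ‖wl‖).mono'
    · exact (Continuous.aestronglyMeasurable (continuous_const.inner continuous_id))
    · filter_upwards [hsupp] with x hx
      calc ‖⟪wl, x⟫‖ = |⟪wl, x⟫| := rfl
      _ ≤ ‖wl‖ * ‖x‖ := abs_real_inner_le_norm wl x
      _ = ‖wl‖ := by rw [hx, mul_one]
  have key : ∀ ρ : ℝ, ‖wl‖ ≤ ρ →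
      ∫ x, max (ρ - ⟪wl, x⟫) 0 ∂P = ρ - ∫ x, ⟪wl, x⟫ ∂P := by
    intro ρ hρ
    have : ∫ x, max (ρ - ⟪wl, x⟫) 0 ∂P = ∫ x, (ρ - ⟪wl, x⟫) ∂P := by
      apply integral_congr_ae
      filter_upwards [hbd] with x hx
      exact max_eq_left (by linarith)
    rw [this, integral_sub (integrable_const ρ) hg, integral_const, probReal_univ,
      smul_eq_mul, one_mul]
  have h1 := key ρl (le_of_lt h)
  have h2 := key ‖wl‖ le_rfl
  have hm := hmin wl ‖wl‖
  rw [hF wl ρl, hF wl ‖wl‖, h1, h2] at hm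
  have hn : (0:ℝ) ≤ ‖wl‖ := norm_nonneg _
  obtain ⟨hl0, hl1⟩ := hlam
  nlinarith [sq_nonneg (ρl - ‖wl‖), sq_nonneg (ρl + ‖wl‖)]
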